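/- arXiv:1412.6775 — 3 statements merged into one kernel-verified Lean document; each statement's English description precedes it below -/
import Mathlib

section
/- One has h̄(0) = 0 and h̄(w) > 0 for every w ∈ (0,𝐱]; consequently h̄ is strictly increasing on [0,𝐱], i.e., h̄(u) < h̄(v) whenever 0 ≤ u < v ≤ 𝐱. -/
/-- The reduced holding cost `h̄(w) = min{h·ξ : ξ ∈ 𝒳, θ·ξ = w}`, defined via `sInf`. -/
noncomputable def hbar {I : ℕ} (𝒳 : Set (Fin I → ℝ)) (θ hvec : Fin I → ℝ) (w : ℝ) : ℝ :=
  sInf {c | ∃ ξ ∈ 𝒳, (∑ i, θ i * ξ i = w) ∧ ∑ i, hvec i * ξ i = c}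

/-- `h̄(0) = 0`, `h̄(w) > 0` for `w ∈ (0,𝐱]`, and `h̄` is strictly increasing on `[0,𝐱]`. -/
theorem hbar_zero_pos_strictMono (I : ℕ) (hI : 1 ≤ I) (𝒳 : Set (Fin I → ℝ))
    (hXc : IsCompact 𝒳) (hXconv : Convex ℝ 𝒳)
    (hXnn : ∀ x ∈ 𝒳, ∀ i, 0 ≤ x i) (hX0 : (0 : Fin I → ℝ) ∈ 𝒳)
    (θ hvec : Fin I → ℝ) (hθ : ∀ i, 0 < θ i) (hh : ∀ i, 0 < hvec i)
    (xmax : ℝ) (hxmax : IsGreatest {w | ∃ ξ ∈ 𝒳, ∑ i, θ i * ξ i = w} xmax)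
    (hxpos : 0 < xmax) :
    hbar 𝒳 θ hvec 0 = 0 ∧
    (∀ w, 0 < w → w ≤ xmax → 0 < hbar 𝒳 θ hvec w) ∧
    (∀ u v : ℝ, 0 ≤ u → u < v → v ≤ xmax → hbar 𝒳 θ hvec u < hbar 𝒳 θ hvec v) := by
  classical
  set S : ℝ → Set ℝ :=
    fun w => {c | ∃ ξ ∈ 𝒳, (∑ i, θ i * ξ i = w) ∧ ∑ i, hvec i * ξ i = c} with hS
  have hbar_eq : ∀ w, hbar 𝒳 θ hvec w = sInf (S w) := fun w => rfl
  -- every element of S w is nonnegative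
  have hnn : ∀ w, ∀ c ∈ S w, (0:ℝ) ≤ c := by
    rintro w c ⟨ξ, hξ, -, rfl⟩
    exact Finset.sum_nonneg fun i _ => mul_nonneg (hh i).le (hXnn ξ hξ i)
  have hbdd : ∀ w, BddBelow (S w) := fun w => ⟨0, fun c hc => hnn w c hc⟩
  -- nonemptiness for 0 ≤ w ≤ xmax
  obtain ⟨ξm, hξm, hξmeq⟩ := hxmax.1
  have hne : ∀ w, 0 ≤ w → w ≤ xmax → (S w).Nonempty := by
    intro w hw0 hwx
    set t : ℝ := w / xmax with ht
    have ht0 : 0 ≤ t := div_nonneg hw0 hxpos.le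
    have ht1 : t ≤ 1 := div_le_one_of_le₀ hwx hxpos.le
    have hmem : t • ξm ∈ 𝒳 := by
      have := hXconv hX0 hξm (a := 1 - t) (b := t) (by linarith) ht0 (by ring)
      simpa using this
    refine ⟨∑ i, hvec i * (t • ξm) i, t • ξm, hmem, ?_, rfl⟩
    have : ∑ i, θ i * (t • ξm) i = t * ∑ i, θ i * ξm i := by
      rw [Finset.mul_sum]; congr 1; ext i; simp [smul_eq_mul]; ring
    rw [this, hξmeq, ht, div_mul_cancel₀ _ hxpos.ne']
  -- attainment of the infimum
  have hcontθ : Continuous (fun ξ : Fin I → ℝ => ∑ i, θ i * ξ i) :=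
    continuous_finset_sum _ fun i _ => continuous_const.mul (continuous_apply i)
  have hconth : Continuous (fun ξ : Fin I → ℝ => ∑ i, hvec i * ξ i) :=
    continuous_finset_sum _ fun i _ => continuous_const.mul (continuous_apply i)
  have hattain : ∀ w, 0 ≤ w → w ≤ xmax → sInf (S w) ∈ S w := by
    intro w hw0 hwx
    have hK : IsCompact (𝒳 ∩ (fun ξ : Fin I → ℝ => ∑ i, θ i * ξ i) ⁻¹' {w}) :=
      hXc.inter_right (isClosed_singleton.preimage hcontθ)
    have himg : S w = (fun ξ : Fin I → ℝ => ∑ i, hvec i * ξ i) ''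
        (𝒳 ∩ (fun ξ : Fin I → ℝ => ∑ i, θ i * ξ i) ⁻¹' {w}) := by
      ext c
      constructor
      · rintro ⟨ξ, hξ, hθw, rfl⟩
        exact ⟨ξ, ⟨hξ, by simpa using hθw⟩, rfl⟩
      · rintro ⟨ξ, ⟨hξ, hθw⟩, rfl⟩
        exact ⟨ξ, hξ, by simpa using hθw, rfl⟩
    have hcomp : IsCompact (S w) := by rw [himg]; exact hK.image hconth
    exact hcomp.sInf_mem (hne w hw0 hwx)
  -- h̄(0) = 0
  have h0mem : (0:ℝ) ∈ S 0 := ⟨0, hX0, by simp, by simp⟩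
  have hzero : hbar 𝒳 θ hvec 0 = 0 := by
    rw [hbar_eq]
    exact le_antisymm (csInf_le (hbdd 0) h0mem) (le_csInf ⟨0, h0mem⟩ (hnn 0))
  -- positivity
  have hpos : ∀ w, 0 < w → w ≤ xmax → 0 < hbar 𝒳 θ hvec w := by
    intro w hw0 hwx
    obtain ⟨ξ, hξ, hθw, heq⟩ := hattain w hw0.le hwx
    rw [hbar_eq, ← heq]
    -- some coordinate of ξ is positive
    have hex : ∃ i ∈ Finset.univ, 0 < hvec i * ξ i := by
      by_contra hcon
      push_neg at hcon
      have : ∀ i, ξ i = 0 := by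
        intro i
        have h1 := hcon i (Finset.mem_univ i)
        have h2 := hXnn ξ hξ i
        nlinarith [hh i]
      have : ∑ i, θ i * ξ i = 0 := by
        apply Finset.sum_eq_zero; intro i _; rw [this i]; ring
      linarith [hθw ▸ this]
    exact Finset.sum_pos' (fun i _ => mul_nonneg (hh i).le (hXnn ξ hξ i)) hex
  refine ⟨hzero, hpos, ?_⟩
  intro u v hu huv hvx
  have hv0 : 0 < v := lt_of_le_of_lt hu huv
  obtain ⟨ξ, hξ, hθv, heq⟩ := hattain v hv0.le hvx
  set t : ℝ := u / v with ht
  have ht0 : 0 ≤ t := div_nonneg hu hv0.le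
  have ht1 : t < 1 := (div_lt_one hv0).mpr huv
  have hmem : t • ξ ∈ 𝒳 := by
    have := hXconv hX0 hξ (a := 1 - t) (b := t) (by linarith) ht0 (by ring)
    simpa using this
  have hsum : ∀ (a : Fin I → ℝ), ∑ i, a i * (t • ξ) i = t * ∑ i, a i * ξ i := by
    intro a
    rw [Finset.mul_sum]; congr 1; ext i; simp [smul_eq_mul]; ring
  have hmemS : t * sInf (S v) ∈ S u := by
    refine ⟨t • ξ, hmem, ?_, ?_⟩
    · rw [hsum, hθv, ht, div_mul_cancel₀ _ hv0.ne']
    · rw [hsum, heq]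
  have hle : hbar 𝒳 θ hvec u ≤ t * sInf (S v) := csInf_le (hbdd u) hmemS
  have hvpos : 0 < sInf (S v) := hpos v hv0 hvx
  calc hbar 𝒳 θ hvec u ≤ t * sInf (S v) := hle
    _ < 1 * sInf (S v) := by exact mul_lt_mul_of_pos_right ht1 hvpos
    _ = hbar 𝒳 θ hvec v := by rw [one_mul, hbar_eq]
end

section
/- Assume h ∈ (0,∞)^I satisfies the ordering h₁/θ₁ ≥ h₂/θ₂ ≥ … ≥ h_I/θ_I. Then for every w ∈ [0,θ·b], the point γ(w) is feasible (0 ≤ γ(w)_i ≤ b_i for all i and θ·γ(w) = w) and minimizes the holding cost: h·γ(w) ≤ h·x for every x ∈ ℝ^I with 0 ≤ x_i ≤ b_i for all i and θ·x = w. In particular, min{h·ξ : 0 ≤ ξ_i ≤ b_i for all i, θ·ξ = w} = Σ_{i=j(w)+1}^I h_i b_i + h_{j(w)} ξ(w). -/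
/-- `B j = b̂_j = Σ_{classes > j} θ_i b_i` (classes are 1-based: class `j` is Fin-index `j-1`). -/
noncomputable def bhat {I : ℕ} (b θ : Fin I → ℝ) (j : ℕ) : ℝ :=
  ∑ i ∈ Finset.univ.filter (fun i : Fin I => j ≤ i.val), θ i * b i

lemma bhat_split {I : ℕ} (b θ : Fin I → ℝ) (j : ℕ) (hj1 : 1 ≤ j) (hjI : j ≤ I) :
    bhat b θ (j-1) = θ ⟨j-1, by have := hjI; omega⟩ * b ⟨j-1, by have := hjI; omega⟩ + bhat b θ j := by
  unfold bhat
  have hset : Finset.univ.filter (fun i : Fin I => j-1 ≤ i.val)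
      = insert (⟨j-1, by have := hjI; omega⟩ : Fin I) (Finset.univ.filter (fun i : Fin I => j ≤ i.val)) := by
    ext i
    simp only [Finset.mem_filter, Finset.mem_insert, Finset.mem_univ, true_and, Fin.ext_iff]
    omega
  rw [hset, Finset.sum_insert (by simp; omega)]

lemma bhat_zero {I : ℕ} (b θ : Fin I → ℝ) : bhat b θ 0 = ∑ k, θ k * b k := by
  unfold bhat
  congr 1
  simp

lemma bhat_nonneg {I : ℕ} (b θ : Fin I → ℝ) (hb : ∀ i, 0 < b i) (hθ : ∀ i, 0 < θ i)
    (j : ℕ) : 0 ≤ bhat b θ j :=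
  Finset.sum_nonneg fun i _ => le_of_lt (mul_pos (hθ i) (hb i))

lemma bhat_le_total {I : ℕ} (b θ : Fin I → ℝ) (hb : ∀ i, 0 < b i) (hθ : ∀ i, 0 < θ i)
    (j : ℕ) : bhat b θ j ≤ ∑ k, θ k * b k := by
  rw [← bhat_zero b θ]
  exact Finset.sum_le_sum_of_subset_of_nonneg
    (fun i hi => by simp) (fun i _ _ => le_of_lt (mul_pos (hθ i) (hb i)))

lemma bhat_I {I : ℕ} (b θ : Fin I → ℝ) : bhat b θ I = 0 := by
  unfold bhat
  rw [Finset.sum_eq_zero]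
  intro i hi
  simp at hi
  omega

/-- Main work lemma. -/
lemma key_lemma {I : ℕ} (b θ hcost : Fin I → ℝ)
    (hb : ∀ i, 0 < b i) (hθ : ∀ i, 0 < θ i)
    (hord : ∀ i j : Fin I, i ≤ j → hcost j * (θ j)⁻¹ ≤ hcost i * (θ i)⁻¹)
    (w : ℝ) (j : ℕ) (hj1 : 1 ≤ j) (hjI : j ≤ I)
    (hlo : bhat b θ j ≤ w) (hhi : w < bhat b θ (j - 1))
    (g : Fin I → ℝ)
    (hg : g = fun i : Fin I => if j ≤ i.val then b i
          else if i.val = j - 1 then (w - bhat b θ j) / θ i else 0) :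
    (∀ i, 0 ≤ g i ∧ g i ≤ b i) ∧ (∑ i, θ i * g i = w) ∧
    (∑ i, hcost i * g i =
      (∑ i ∈ Finset.univ.filter (fun i : Fin I => j ≤ i.val), hcost i * b i)
        + hcost ⟨j - 1, by have := hjI; omega⟩ * ((w - bhat b θ j) / θ (⟨j - 1, by have := hjI; omega⟩ : Fin I))) ∧
    (∀ x : Fin I → ℝ, (∀ i, 0 ≤ x i ∧ x i ≤ b i) → (∑ i, θ i * x i = w) →
      ∑ i, hcost i * g i ≤ ∑ i, hcost i * x i) := by
  set jf : Fin I := ⟨j - 1, by have := hjI; omega⟩ with hjf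
  set ξ : ℝ := (w - bhat b θ j) / θ jf with hξ
  have hθjf := hθ jf
  have hξ0 : 0 ≤ ξ := div_nonneg (by linarith) (le_of_lt hθjf)
  have hsplit := bhat_split b θ j hj1 hjI
  have hξb : ξ ≤ b jf := by
    rw [hξ, div_le_iff₀ hθjf]
    nlinarith [hhi, hsplit]
  -- generic sum formula
  have sum_formula : ∀ f : Fin I → ℝ, ∑ i, f i * g i =
      (∑ i ∈ Finset.univ.filter (fun i : Fin I => j ≤ i.val), f i * b i) + f jf * ξ := by
    intro f
    rw [← Finset.sum_filter_add_sum_filter_not Finset.univ (fun i : Fin I => j ≤ i.val)]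
    congr 1
    · apply Finset.sum_congr rfl
      intro i hi
      simp only [Finset.mem_filter] at hi
      rw [hg]
      simp [hi.2]
    · rw [Finset.sum_eq_single_of_mem jf (by simp only [Finset.mem_filter, Finset.mem_univ, true_and, hjf, Fin.val_mk, not_le]; omega)]
      · rw [hg]; simp [show ¬ (j ≤ jf.val) by simp [hjf]; omega, show jf.val = j - 1 from rfl, show ¬ (j ≤ j - 1) by omega, hξ]
      · intro i hi hne
        simp only [Finset.mem_filter, Finset.mem_univ, true_and, not_le] at hi
        have : i.val ≠ j - 1 := fun h => hne (Fin.ext h)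
        rw [hg]
        simp [Nat.not_le.mpr hi, this]
  have hfeas : ∀ i, 0 ≤ g i ∧ g i ≤ b i := by
    intro i
    rw [hg]
    dsimp only
    split_ifs with h1 h2
    · exact ⟨le_of_lt (hb i), le_refl _⟩
    · have : i = jf := Fin.ext h2
      rw [this]
      exact ⟨hξ0, hξb⟩
    · exact ⟨le_refl _, le_of_lt (hb i)⟩
  have hsumθ : ∑ i, θ i * g i = w := by
    rw [sum_formula θ]
    have : (∑ i ∈ Finset.univ.filter (fun i : Fin I => j ≤ i.val), θ i * b i) = bhat b θ j := rfl
    rw [this, hξ]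
    field_simp
    ring
  have hval : ∑ i, hcost i * g i =
      (∑ i ∈ Finset.univ.filter (fun i : Fin I => j ≤ i.val), hcost i * b i) + hcost jf * ξ :=
    sum_formula hcost
  refine ⟨hfeas, hsumθ, hval, ?_⟩
  intro x hx hxw
  set c : Fin I → ℝ := fun i => hcost i * (θ i)⁻¹ with hc
  have hkey : ∀ i : Fin I, c jf * (θ i * x i - θ i * g i) ≤ c i * (θ i * x i - θ i * g i) := by
    intro i
    by_cases h1 : j ≤ i.val
    · have hgi : g i = b i := by rw [hg]; simp [h1]
      have hd : θ i * x i - θ i * g i ≤ 0 := by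
        rw [hgi]
        have := (hx i).2
        nlinarith [hθ i]
      have hle : jf ≤ i := by simp [hjf, Fin.le_def]; omega
      exact mul_le_mul_of_nonpos_right (hord jf i hle) hd
    · by_cases h2 : i.val = j - 1
      · have : i = jf := Fin.ext h2
        rw [this]
      · have hgi : g i = 0 := by rw [hg]; simp [h1, h2]
        have hd : 0 ≤ θ i * x i - θ i * g i := by
          rw [hgi]
          have := (hx i).1
          nlinarith [hθ i]
        have hle : i ≤ jf := by simp [hjf, Fin.le_def]; omega
        exact mul_le_mul_of_nonneg_right (hord i jf hle) hd
  have hsum := Finset.sum_le_sum (fun i (_ : i ∈ Finset.univ) => hkey i)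
  have hL : ∑ i, c jf * (θ i * x i - θ i * g i) = 0 := by
    rw [← Finset.mul_sum, Finset.sum_sub_distrib, hxw, hsumθ]
    ring
  have hcθ : ∀ i : Fin I, c i * θ i = hcost i := by
    intro i
    show hcost i * (θ i)⁻¹ * θ i = hcost i
    exact inv_mul_cancel_right₀ (hθ i).ne' _
  have hR : ∑ i, c i * (θ i * x i - θ i * g i)
      = ∑ i, hcost i * x i - ∑ i, hcost i * g i := by
    rw [← Finset.sum_sub_distrib]
    apply Finset.sum_congr rfl
    intro i _
    calc c i * (θ i * x i - θ i * g i) = (c i * θ i) * x i - (c i * θ i) * g i := by ring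
      _ = hcost i * x i - hcost i * g i := by rw [hcθ i]
  rw [hL, hR] at hsum
  linarith


/-- Under the ordering `h₁μ₁ ≥ … ≥ h_Iμ_I`, for every `w ∈ [0,θ·b]` the point `γ(w)` is
feasible and minimizes the holding cost `h·x` among feasible points; in particular the
minimum equals `Σ_{i=j(w)+1}^I h_i b_i + h_{j(w)} ξ(w)`. -/
theorem gamma_minimizes_holding_cost (I : ℕ) (hI : 1 ≤ I)
    (b θ hcost : Fin I → ℝ)
    (hb : ∀ i, 0 < b i) (hθ : ∀ i, 0 < θ i) (hh : ∀ i, 0 < hcost i)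
    (hord : ∀ i j : Fin I, i ≤ j → hcost j * (θ j)⁻¹ ≤ hcost i * (θ i)⁻¹)
    (γ : ℝ → Fin I → ℝ)
    (hγ : ∀ w : ℝ, 0 ≤ w → w < ∑ k, θ k * b k →
      ∀ j : ℕ, 1 ≤ j → j ≤ I → bhat b θ j ≤ w → w < bhat b θ (j - 1) →
        γ w = fun i : Fin I =>
          if j ≤ i.val then b i
          else if i.val = j - 1 then (w - bhat b θ j) / θ i else 0)
    (hγtop : γ (∑ k, θ k * b k) = b) :
    ∀ w ∈ Set.Icc (0:ℝ) (∑ k, θ k * b k),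
      ((∀ i, 0 ≤ γ w i ∧ γ w i ≤ b i) ∧ (∑ i, θ i * γ w i = w)) ∧
      (∀ x : Fin I → ℝ, (∀ i, 0 ≤ x i ∧ x i ≤ b i) → (∑ i, θ i * x i = w) →
        ∑ i, hcost i * γ w i ≤ ∑ i, hcost i * x i) ∧
      (∀ j : ℕ, ∀ hj1 : 1 ≤ j, ∀ hjI : j ≤ I,
        bhat b θ j ≤ w → w < bhat b θ (j - 1) →
        IsLeast {c | ∃ x : Fin I → ℝ, (∀ i, 0 ≤ x i ∧ x i ≤ b i) ∧
                      (∑ i, θ i * x i = w) ∧ ∑ i, hcost i * x i = c}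
          ((∑ i ∈ Finset.univ.filter (fun i : Fin I => j ≤ i.val), hcost i * b i)
            + hcost ⟨j - 1, by omega⟩
              * ((w - bhat b θ j) / θ (⟨j - 1, by omega⟩ : Fin I)))) := by
  intro w hw
  obtain ⟨hw0, hwT⟩ := hw
  -- part (C) as a standalone fact, valid in all cases
  have partC : ∀ j : ℕ, ∀ hj1 : 1 ≤ j, ∀ hjI : j ≤ I,
      bhat b θ j ≤ w → w < bhat b θ (j - 1) →
      IsLeast {c | ∃ x : Fin I → ℝ, (∀ i, 0 ≤ x i ∧ x i ≤ b i) ∧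
                    (∑ i, θ i * x i = w) ∧ ∑ i, hcost i * x i = c}
        ((∑ i ∈ Finset.univ.filter (fun i : Fin I => j ≤ i.val), hcost i * b i)
          + hcost ⟨j - 1, by omega⟩
            * ((w - bhat b θ j) / θ (⟨j - 1, by omega⟩ : Fin I))) := by
    intro j hj1 hjI hlo hhi
    have hwT' : w < ∑ k, θ k * b k :=
      lt_of_lt_of_le hhi (bhat_le_total b θ hb hθ _)
    have hgw := hγ w hw0 hwT' j hj1 hjI hlo hhi
    obtain ⟨hfeas, hsumθ, hval, hopt⟩ :=
      key_lemma b θ hcost hb hθ hord w j hj1 hjI hlo hhi (γ w) hgw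
    constructor
    · exact ⟨γ w, hfeas, hsumθ, hval⟩
    · rintro c ⟨x, hxfeas, hxsum, rfl⟩
      rw [← hval]
      exact hopt x hxfeas hxsum
  rcases lt_or_eq_of_le hwT with hwlt | hweq
  · -- find the bracketing index j
    have hex : ∃ j : ℕ, bhat b θ j ≤ w := ⟨I, by rw [bhat_I]; exact hw0⟩
    classical
    set j := Nat.find hex with hj
    have hjle : bhat b θ j ≤ w := Nat.find_spec hex
    have hj1 : 1 ≤ j := by
      by_contra h
      have : j = 0 := by omega
      rw [this, bhat_zero] at hjle
      linarith
    have hjI : j ≤ I := Nat.find_min' hex (by rw [bhat_I]; exact hw0)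
    have hjhi : w < bhat b θ (j - 1) := by
      have := Nat.find_min hex (show j - 1 < j by omega)
      push_neg at this
      exact this
    have hgw := hγ w hw0 hwlt j hj1 hjI hjle hjhi
    obtain ⟨hfeas, hsumθ, hval, hopt⟩ :=
      key_lemma b θ hcost hb hθ hord w j hj1 hjI hjle hjhi (γ w) hgw
    exact ⟨⟨hfeas, hsumθ⟩, hopt, fun j' h1 h2 h3 h4 => partC j' h1 h2 h3 h4⟩
  · subst hweq
    rw [hγtop]
    refine ⟨⟨fun i => ⟨le_of_lt (hb i), le_refl _⟩, rfl⟩, ?_, ?_⟩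
    · intro x hx hxw
      -- x must equal b
      have hx_eq : ∀ i, x i = b i := by
        have hzero : ∑ i, θ i * (b i - x i) = 0 := by
          simp only [mul_sub]
          rw [Finset.sum_sub_distrib, hxw]
          ring
        have hnn : ∀ i ∈ Finset.univ, 0 ≤ θ i * (b i - x i) := by
          intro i _
          have := (hx i).2
          nlinarith [hθ i]
        intro i
        have := (Finset.sum_eq_zero_iff_of_nonneg hnn).mp hzero i (Finset.mem_univ i)
        have hθi := (hθ i).ne'
        have : b i - x i = 0 := by
          rcases mul_eq_zero.mp this with h | h
          · exact absurd h hθi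
          · exact h
        linarith
      apply le_of_eq
      apply Finset.sum_congr rfl
      intro i _
      rw [hx_eq i]
    · intro j hj1 hjI hlo hhi
      exfalso
      have := bhat_le_total b θ hb hθ (j - 1)
      linarith
end

section
/- The Harrison–Taksar Bellman equation has at most one C² solution: if f and g are both functions in C²[0,𝐱] satisfying min{ (1/2) σ̄² u''(x) + m̄ u'(x) − α u(x) + h̄(x), u'(x), r̄ − u'(x) } = 0 for all x ∈ (0,𝐱), together with the Neumann boundary conditions u'(0) = 0 and u'(𝐱) = r̄, then f(x) = g(x) for all x ∈ [0,𝐱]. -/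
open Set Filter Topology

private lemma sq_pos_of_ne' {σ : ℝ} (h : σ ≠ 0) : 0 < σ ^ 2 :=
  lt_of_le_of_ne (sq_nonneg σ) (Ne.symm (pow_ne_zero 2 h))

private lemma min3_nonneg {A B C : ℝ} (h : min (min A B) C = 0) : 0 ≤ A ∧ 0 ≤ B ∧ 0 ≤ C := by
  have h1 := min_le_left (min A B) C
  have h2 := min_le_right (min A B) C
  have h3 := min_le_left A B
  have h4 := min_le_right A B
  rw [h] at h1 h2
  exact ⟨le_trans h1 h3, le_trans h1 h4, h2⟩

private lemma min3_first {A B C : ℝ} (h : min (min A B) C = 0) (hB : 0 < B) (hC : 0 < C) :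
    A = 0 := by
  rcases le_or_gt A B with hab | hab
  · rcases le_or_gt (min A B) C with hc | hc
    · rw [min_eq_left hc, min_eq_left hab] at h; exact h
    · rw [min_eq_right hc.le] at h; linarith
  · rw [min_eq_right hab.le] at h
    rcases le_or_gt B C with hc | hc
    · rw [min_eq_left hc] at h; linarith
    · rw [min_eq_right hc.le] at h; linarith

private lemma eq_zero_of_closure {φ : ℝ → ℝ} {a b : ℝ} {s : Set ℝ}
    (hcont : ContinuousOn φ (Icc a b)) (hs : s ⊆ Icc a b)
    (hz : ∀ x ∈ s, φ x = 0) {c : ℝ} (hc : c ∈ Icc a b) (hcc : c ∈ closure s) :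
    φ c = 0 := by
  have hne : (𝓝[s] c).NeBot := mem_closure_iff_nhdsWithin_neBot.mp hcc
  have h1 : Tendsto φ (𝓝[s] c) (𝓝 (φ c)) := (hcont c hc).mono hs
  have h2 : Tendsto φ (𝓝[s] c) (𝓝 0) := by
    apply Tendsto.congr' _ tendsto_const_nhds
    filter_upwards [self_mem_nhdsWithin] with x hx
    exact (hz x hx).symm
  exact tendsto_nhds_unique h1 h2

private lemma nonneg_of_closure {φ : ℝ → ℝ} {a b : ℝ} {s : Set ℝ}
    (hcont : ContinuousOn φ (Icc a b)) (hs : s ⊆ Icc a b)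
    (hz : ∀ x ∈ s, 0 ≤ φ x) {c : ℝ} (hc : c ∈ Icc a b) (hcc : c ∈ closure s) :
    0 ≤ φ c := by
  have hne : (𝓝[s] c).NeBot := mem_closure_iff_nhdsWithin_neBot.mp hcc
  have h1 : Tendsto φ (𝓝[s] c) (𝓝 (φ c)) := (hcont c hc).mono hs
  exact ge_of_tendsto h1 (by filter_upwards [self_mem_nhdsWithin] with x hx using hz x hx)

private lemma myAntitoneOn {φ φ' : ℝ → ℝ} {a b : ℝ}
    (hcont : ContinuousOn φ (Icc a b))
    (hd : ∀ x ∈ Ioo a b, HasDerivAt φ (φ' x) x)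
    (hneg : ∀ x ∈ Ioo a b, φ' x ≤ 0) : AntitoneOn φ (Icc a b) := by
  refine antitoneOn_of_deriv_nonpos (convex_Icc a b) hcont ?_ ?_
  · intro x hx
    rw [interior_Icc] at hx
    exact (hd x hx).differentiableAt.differentiableWithinAt
  · intro x hx
    rw [interior_Icc] at hx
    rw [(hd x hx).deriv]; exact hneg x hx

private lemma myMonotoneOn {φ φ' : ℝ → ℝ} {a b : ℝ}
    (hcont : ContinuousOn φ (Icc a b))
    (hd : ∀ x ∈ Ioo a b, HasDerivAt φ (φ' x) x)
    (hpos : ∀ x ∈ Ioo a b, 0 ≤ φ' x) : MonotoneOn φ (Icc a b) := by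
  refine monotoneOn_of_deriv_nonneg (convex_Icc a b) hcont ?_ ?_
  · intro x hx
    rw [interior_Icc] at hx
    exact (hd x hx).differentiableAt.differentiableWithinAt
  · intro x hx
    rw [interior_Icc] at hx
    rw [(hd x hx).deriv]; exact hpos x hx

private lemma myStrictMonoOn {φ φ' : ℝ → ℝ} {a b : ℝ}
    (hcont : ContinuousOn φ (Icc a b))
    (hd : ∀ x ∈ Ioo a b, HasDerivAt φ (φ' x) x)
    (hpos : ∀ x ∈ Ioo a b, 0 < φ' x) : StrictMonoOn φ (Icc a b) := by
  refine strictMonoOn_of_deriv_pos (convex_Icc a b) hcont ?_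
  intro x hx
  rw [interior_Icc] at hx
  rw [(hd x hx).deriv]; exact hpos x hx

private lemma myStrictAntiOn {φ φ' : ℝ → ℝ} {a b : ℝ}
    (hcont : ContinuousOn φ (Icc a b))
    (hd : ∀ x ∈ Ioo a b, HasDerivAt φ (φ' x) x)
    (hneg : ∀ x ∈ Ioo a b, φ' x < 0) : StrictAntiOn φ (Icc a b) := by
  refine strictAntiOn_of_deriv_neg (convex_Icc a b) hcont ?_
  intro x hx
  rw [interior_Icc] at hx
  rw [(hd x hx).deriv]; exact hneg x hx

/-- If the maximum of `w` over `[0,xmax]` is attained at `x₀` with `w' x₀ = 0`,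
then `w'' x₀ ≤ 0`. -/
private lemma second_deriv_nonpos_at_max {w w' w'' : ℝ → ℝ} {xmax : ℝ} (hx : 0 < xmax)
    (hwc : ContinuousOn w (Icc 0 xmax))
    (hw'c : ContinuousOn w' (Icc 0 xmax))
    (hw''c : ContinuousOn w'' (Icc 0 xmax))
    (hwd : ∀ x ∈ Ioo 0 xmax, HasDerivAt w (w' x) x)
    (hw'd : ∀ x ∈ Ioo 0 xmax, HasDerivAt w' (w'' x) x)
    {x₀ : ℝ} (hx₀ : x₀ ∈ Icc 0 xmax) (hmax : ∀ x ∈ Icc 0 xmax, w x ≤ w x₀)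
    (hw'0 : w' x₀ = 0) : w'' x₀ ≤ 0 := by
  by_contra hcon
  push_neg at hcon
  obtain ⟨δ, hδ, hδp⟩ := Metric.continuousWithinAt_iff.mp (hw''c x₀ hx₀) (w'' x₀) hcon
  have hsgn : ∀ x ∈ Icc 0 xmax, dist x x₀ < δ → 0 < w'' x := by
    intro x hxm hdist
    have := hδp hxm hdist
    have := abs_lt.mp (by rwa [Real.dist_eq] at this)
    linarith [this.1]
  rcases lt_or_ge x₀ xmax with hlt | hge
  · -- right side
    set e := min (x₀ + δ/2) xmax with he
    have he1 : x₀ < e := lt_min (by linarith) hlt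
    have he2 : e ≤ xmax := min_le_right _ _
    have hsub : Icc x₀ e ⊆ Icc 0 xmax := fun y hy => ⟨le_trans hx₀.1 hy.1, le_trans hy.2 he2⟩
    have hIoosub : Ioo x₀ e ⊆ Ioo 0 xmax :=
      fun y hy => ⟨lt_of_le_of_lt hx₀.1 hy.1, lt_of_lt_of_le hy.2 he2⟩
    have hdist : ∀ y ∈ Icc x₀ e, dist y x₀ < δ := by
      intro y hy
      rw [Real.dist_eq, abs_of_nonneg (by linarith [hy.1])]
      have : y ≤ x₀ + δ/2 := le_trans hy.2 (min_le_left _ _)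
      linarith
    have hmono : StrictMonoOn w' (Icc x₀ e) := by
      refine myStrictMonoOn (hw'c.mono hsub) (fun y hy => hw'd y (hIoosub hy)) ?_
      intro y hy
      exact hsgn y (hsub (Ioo_subset_Icc_self hy)) (hdist y (Ioo_subset_Icc_self hy))
    have hw'pos : ∀ y ∈ Ioo x₀ e, 0 < w' y := by
      intro y hy
      have := hmono (left_mem_Icc.mpr he1.le) (Ioo_subset_Icc_self hy) hy.1
      rwa [hw'0] at this
    have hwmono : StrictMonoOn w (Icc x₀ e) := by
      refine myStrictMonoOn (hwc.mono hsub) (fun y hy => hwd y (hIoosub hy)) hw'pos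
    have := hwmono (left_mem_Icc.mpr he1.le) (right_mem_Icc.mpr he1.le) he1
    exact absurd (hmax e (hsub (right_mem_Icc.mpr he1.le))) (by linarith)
  · -- x₀ = xmax; use left side
    have hx₀pos : 0 < x₀ := lt_of_lt_of_le hx hge
    set e := max (x₀ - δ/2) 0 with he
    have he1 : e < x₀ := max_lt (by linarith) hx₀pos
    have he2 : 0 ≤ e := le_max_right _ _
    have hsub : Icc e x₀ ⊆ Icc 0 xmax := fun y hy => ⟨le_trans he2 hy.1, le_trans hy.2 hx₀.2⟩
    have hIoosub : Ioo e x₀ ⊆ Ioo 0 xmax :=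
      fun y hy => ⟨lt_of_le_of_lt he2 hy.1, lt_of_lt_of_le hy.2 hx₀.2⟩
    have hdist : ∀ y ∈ Icc e x₀, dist y x₀ < δ := by
      intro y hy
      rw [Real.dist_eq, abs_of_nonpos (by linarith [hy.2])]
      have : x₀ - δ/2 ≤ y := le_trans (le_max_left _ _) hy.1
      linarith
    have hmono : StrictMonoOn w' (Icc e x₀) := by
      refine myStrictMonoOn (hw'c.mono hsub) (fun y hy => hw'd y (hIoosub hy)) ?_
      intro y hy
      exact hsgn y (hsub (Ioo_subset_Icc_self hy)) (hdist y (Ioo_subset_Icc_self hy))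
    have hw'neg : ∀ y ∈ Ioo e x₀, w' y < 0 := by
      intro y hy
      have := hmono (Ioo_subset_Icc_self hy) (right_mem_Icc.mpr he1.le) hy.2
      rwa [hw'0] at this
    have hwanti : StrictAntiOn w (Icc e x₀) := by
      refine myStrictAntiOn (hwc.mono hsub) (fun y hy => hwd y (hIoosub hy)) hw'neg
    have := hwanti (left_mem_Icc.mpr he1.le) (right_mem_Icc.mpr he1.le) he1
    exact absurd (hmax e (hsub (left_mem_Icc.mpr he1.le))) (by linarith)

/-- If `u' ≤ r` on `[0,xmax]` with equality at `xmax`, then `u'' xmax ≥ 0`. -/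
private lemma second_deriv_nonneg_at_right_max {u' u'' : ℝ → ℝ} {xmax r : ℝ} (hx : 0 < xmax)
    (hu'c : ContinuousOn u' (Icc 0 xmax))
    (hu''c : ContinuousOn u'' (Icc 0 xmax))
    (hu'd : ∀ x ∈ Ioo 0 xmax, HasDerivAt u' (u'' x) x)
    (hle : ∀ x ∈ Icc 0 xmax, u' x ≤ r) (hend : u' xmax = r) :
    0 ≤ u'' xmax := by
  by_contra hcon
  push_neg at hcon
  have hxm : xmax ∈ Icc (0:ℝ) xmax := right_mem_Icc.mpr hx.le
  obtain ⟨δ, hδ, hδp⟩ := Metric.continuousWithinAt_iff.mp (hu''c xmax hxm) (-(u'' xmax)) (by linarith)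
  have hsgn : ∀ x ∈ Icc 0 xmax, dist x xmax < δ → u'' x < 0 := by
    intro x hxmem hdist
    have := hδp hxmem hdist
    have := abs_lt.mp (by rwa [Real.dist_eq] at this)
    linarith [this.2]
  set e := max (xmax - δ/2) 0 with he
  have he1 : e < xmax := max_lt (by linarith) hx
  have he2 : 0 ≤ e := le_max_right _ _
  have hsub : Icc e xmax ⊆ Icc 0 xmax := fun y hy => ⟨le_trans he2 hy.1, hy.2⟩
  have hIoosub : Ioo e xmax ⊆ Ioo 0 xmax := fun y hy => ⟨lt_of_le_of_lt he2 hy.1, hy.2⟩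
  have hdist : ∀ y ∈ Icc e xmax, dist y xmax < δ := by
    intro y hy
    rw [Real.dist_eq, abs_of_nonpos (by linarith [hy.2])]
    have : xmax - δ/2 ≤ y := le_trans (le_max_left _ _) hy.1
    linarith
  have hanti : StrictAntiOn u' (Icc e xmax) := by
    refine myStrictAntiOn (hu'c.mono hsub) (fun y hy => hu'd y (hIoosub hy)) ?_
    intro y hy
    exact hsgn y (hsub (Ioo_subset_Icc_self hy)) (hdist y (Ioo_subset_Icc_self hy))
  have := hanti (left_mem_Icc.mpr he1.le) (right_mem_Icc.mpr he1.le) he1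
  rw [hend] at this
  exact absurd (hle e (hsub (left_mem_Icc.mpr he1.le))) (by linarith)

section Sol

variable {xmax σbar mbar α rbar : ℝ} {hbar u u' u'' : ℝ → ℝ}

/-- `u' ≥ 0` on `[0,xmax]`. -/
private lemma deriv_nonneg (hx : 0 < xmax) (hr : 0 < rbar)
    (huEq : ∀ x ∈ Ioo 0 xmax,
      min (min (σbar ^ 2 / 2 * u'' x + mbar * u' x - α * u x + hbar x) (u' x)) (rbar - u' x) = 0)
    (hu0 : u' 0 = 0) (hub : u' xmax = rbar) :
    ∀ x ∈ Icc 0 xmax, 0 ≤ u' x := by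
  intro x hxm
  rcases eq_or_lt_of_le hxm.1 with h0 | h0
  · rw [← h0, hu0]
  rcases eq_or_lt_of_le hxm.2 with h1 | h1
  · rw [h1, hub]; exact hr.le
  exact (min3_nonneg (huEq x ⟨h0, h1⟩)).2.1

/-- `u' ≤ rbar` on `[0,xmax]`. -/
private lemma deriv_le (hx : 0 < xmax) (hr : 0 < rbar)
    (huEq : ∀ x ∈ Ioo 0 xmax,
      min (min (σbar ^ 2 / 2 * u'' x + mbar * u' x - α * u x + hbar x) (u' x)) (rbar - u' x) = 0)
    (hu0 : u' 0 = 0) (hub : u' xmax = rbar) :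
    ∀ x ∈ Icc 0 xmax, u' x ≤ rbar := by
  intro x hxm
  rcases eq_or_lt_of_le hxm.1 with h0 | h0
  · rw [← h0, hu0]; exact hr.le
  rcases eq_or_lt_of_le hxm.2 with h1 | h1
  · rw [h1, hub]
  linarith [(min3_nonneg (huEq x ⟨h0, h1⟩)).2.2]

private lemma gammaCont (hbarCont : ContinuousOn hbar (Icc 0 xmax))
    (huCont : ContinuousOn u (Icc 0 xmax))
    (hu'Cont : ContinuousOn u' (Icc 0 xmax))
    (hu''Cont : ContinuousOn u'' (Icc 0 xmax)) :
    ContinuousOn (fun x => σbar ^ 2 / 2 * u'' x + mbar * u' x - α * u x + hbar x)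
      (Icc 0 xmax) :=
  (((continuousOn_const.mul hu''Cont).add (continuousOn_const.mul hu'Cont)).sub
      (continuousOn_const.mul huCont)).add hbarCont

/-- `Γu ≥ 0` on all of `[0,xmax]`. -/
private lemma gamma_nonneg (hx : 0 < xmax)
    (hbarCont : ContinuousOn hbar (Icc 0 xmax))
    (huCont : ContinuousOn u (Icc 0 xmax))
    (hu'Cont : ContinuousOn u' (Icc 0 xmax))
    (hu''Cont : ContinuousOn u'' (Icc 0 xmax))
    (huEq : ∀ x ∈ Ioo 0 xmax,
      min (min (σbar ^ 2 / 2 * u'' x + mbar * u' x - α * u x + hbar x) (u' x)) (rbar - u' x) = 0) :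
    ∀ x ∈ Icc 0 xmax, 0 ≤ σbar ^ 2 / 2 * u'' x + mbar * u' x - α * u x + hbar x := by
  intro x hxm
  have hcl : x ∈ closure (Ioo 0 xmax) := by
    rw [closure_Ioo hx.ne]; exact hxm
  have hne : (𝓝[Ioo 0 xmax] x).NeBot := mem_closure_iff_nhdsWithin_neBot.mp hcl
  have h1 : Tendsto (fun x => σbar ^ 2 / 2 * u'' x + mbar * u' x - α * u x + hbar x)
      (𝓝[Ioo 0 xmax] x) (𝓝 (σbar ^ 2 / 2 * u'' x + mbar * u' x - α * u x + hbar x)) :=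
    ((gammaCont hbarCont huCont hu'Cont hu''Cont) x hxm).mono Ioo_subset_Icc_self
  refine ge_of_tendsto h1 ?_
  filter_upwards [self_mem_nhdsWithin] with y hy
  exact (min3_nonneg (huEq y hy)).1

set_option maxHeartbeats 1000000 in
/-- Key structural lemma: `u' > 0` on `(0, xmax]`. -/
private lemma deriv_pos (hx : 0 < xmax) (hσ : σbar ≠ 0) (hα : 0 < α) (hr : 0 < rbar)
    (hbarCont : ContinuousOn hbar (Icc 0 xmax))
    (hbarConv : ConvexOn ℝ (Icc 0 xmax) hbar)
    (hbarMono : StrictMonoOn hbar (Icc 0 xmax))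
    (huCont : ContinuousOn u (Icc 0 xmax))
    (hu'Cont : ContinuousOn u' (Icc 0 xmax))
    (hu''Cont : ContinuousOn u'' (Icc 0 xmax))
    (huDeriv : ∀ x ∈ Ioo 0 xmax, HasDerivAt u (u' x) x)
    (hu'Deriv : ∀ x ∈ Ioo 0 xmax, HasDerivAt u' (u'' x) x)
    (huEq : ∀ x ∈ Ioo 0 xmax,
      min (min (σbar ^ 2 / 2 * u'' x + mbar * u' x - α * u x + hbar x) (u' x)) (rbar - u' x) = 0)
    (hu0 : u' 0 = 0) (hub : u' xmax = rbar) :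
    ∀ c ∈ Ioc 0 xmax, 0 < u' c := by
  have hσ2 : 0 < σbar ^ 2 := lt_of_le_of_ne (sq_nonneg σbar) (Ne.symm (pow_ne_zero 2 hσ))
  have hnn := deriv_nonneg hx hr huEq hu0 hub
  have hlr := deriv_le hx hr huEq hu0 hub
  have hΓ := gamma_nonneg hx hbarCont huCont hu'Cont hu''Cont huEq
  intro c hc
  refine lt_of_le_of_ne (hnn c ⟨hc.1.le, hc.2⟩) fun h0 => ?_
  -- Z : set of zeros of u'
  set Z := {x | x ∈ Icc 0 xmax ∧ u' x = 0} with hZ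
  have hcZ : c ∈ Z := ⟨⟨hc.1.le, hc.2⟩, h0.symm⟩
  have hZne : Z.Nonempty := ⟨c, hcZ⟩
  have hZbdd : BddAbove Z := ⟨xmax, fun y hy => hy.1.2⟩
  set cs := sSup Z with hcs
  have hcscl : cs ∈ closure Z := csSup_mem_closure hZne hZbdd
  have hZsub : Z ⊆ Icc 0 xmax := fun y hy => hy.1
  have hcsIcc : cs ∈ Icc 0 xmax :=
    (isClosed_Icc.closure_subset_iff.mpr hZsub) hcscl
  have hu'cs : u' cs = 0 := by
    have hne : (𝓝[Z] cs).NeBot := mem_closure_iff_nhdsWithin_neBot.mp hcscl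
    have h1 : Tendsto u' (𝓝[Z] cs) (𝓝 (u' cs)) := (hu'Cont cs hcsIcc).mono hZsub
    have h2 : Tendsto u' (𝓝[Z] cs) (𝓝 0) := by
      apply Tendsto.congr' _ tendsto_const_nhds
      filter_upwards [self_mem_nhdsWithin] with y hy
      exact hy.2.symm
    exact tendsto_nhds_unique h1 h2
  have hcspos : 0 < cs := lt_of_lt_of_le hc.1 (le_csSup hZbdd hcZ)
  have hcslt : cs < xmax := by
    rcases eq_or_lt_of_le hcsIcc.2 with h | h
    · exfalso; rw [h, hub] at hu'cs; exact hr.ne' hu'cs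
    · exact h
  have hcsIoo : cs ∈ Ioo 0 xmax := ⟨hcspos, hcslt⟩
  have hpos_right : ∀ x, cs < x → x ≤ xmax → 0 < u' x := by
    intro x h1 h2
    refine lt_of_le_of_ne (hnn x ⟨by linarith, h2⟩) fun h => ?_
    exact absurd (le_csSup hZbdd ⟨⟨by linarith, h2⟩, h.symm⟩) (not_le.mpr h1)
  -- u'' cs = 0
  have hloc : IsLocalMin u' cs := by
    have hmem : Icc 0 xmax ∈ 𝓝 cs := Icc_mem_nhds hcspos hcslt
    filter_upwards [hmem] with y hy
    rw [hu'cs]; exact hnn y hy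
  have hu''cs : u'' cs = 0 := hloc.hasDerivAt_eq_zero (hu'Deriv cs hcsIoo)
  -- α u cs ≤ hbar cs
  have hval : α * u cs ≤ hbar cs := by
    have := hΓ cs hcsIcc
    rw [hu'cs, hu''cs] at this
    linarith
  -- positive slope of hbar at cs
  set a := cs / 2 with ha
  have haIcc : a ∈ Icc 0 xmax := ⟨by linarith, by linarith⟩
  have hacs : a < cs := by rw [ha]; linarith
  set s := (hbar cs - hbar a) / (cs - a) with hs
  have hspos : 0 < s :=
    div_pos (sub_pos.2 (hbarMono haIcc hcsIcc hacs)) (by linarith)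
  have hslope : ∀ x ∈ Icc 0 xmax, cs < x → hbar cs + s * (x - cs) ≤ hbar x := by
    intro x hxm hxgt
    have h2 : s ≤ (hbar x - hbar cs) / (x - cs) :=
      hbarConv.slope_mono_adjacent haIcc hxm hacs hxgt
    have h3 : s * (x - cs) ≤ hbar x - hbar cs := (le_div_iff₀ (by linarith)).mp h2
    linarith
  -- neighborhood where u' < rbar
  obtain ⟨δ, hδ, hδp⟩ := Metric.continuousWithinAt_iff.mp (hu'Cont cs hcsIcc) rbar hr
  have hlt_r : ∀ x ∈ Icc 0 xmax, dist x cs < δ → u' x < rbar := by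
    intro x hxm hdist
    have := hδp hxm hdist
    rw [Real.dist_eq, hu'cs, sub_zero] at this
    exact lt_of_le_of_lt (le_abs_self _) this
  -- choose t
  set t := min (min δ (xmax - cs)) (min 1 (σbar ^ 2 / (4 * (α + |mbar| + 1)))) with ht
  have hden : 0 < 4 * (α + |mbar| + 1) := by positivity
  have htpos : 0 < t := by
    refine lt_min (lt_min hδ (by linarith)) (lt_min one_pos (div_pos hσ2 hden))
  have ht1 : t ≤ δ := le_trans (min_le_left _ _) (min_le_left _ _)
  have ht2 : cs + t ≤ xmax := by
    have h' : t ≤ xmax - cs :=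
      le_trans (min_le_left (min δ (xmax - cs)) _) (min_le_right δ (xmax - cs))
    linarith
  have ht3 : t ≤ 1 := le_trans (min_le_right _ _) (min_le_left _ _)
  have ht4 : t ≤ σbar ^ 2 / (4 * (α + |mbar| + 1)) :=
    le_trans (min_le_right _ _) (min_le_right _ _)
  have hkey : (α * t ^ 2 + |mbar| * t) ≤ σbar ^ 2 / 4 := by
    have e1 : α * t * t ≤ α * t * 1 :=
      mul_le_mul_of_nonneg_left ht3 (mul_nonneg hα.le htpos.le)
    have h1 : α * t ^ 2 + |mbar| * t ≤ (α + |mbar| + 1) * t := by nlinarith [htpos.le]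
    have h2 : (α + |mbar| + 1) * t ≤ σbar ^ 2 / 4 := by
      rw [le_div_iff₀ hden] at ht4
      nlinarith []
    linarith
  -- the interval I = [cs, cs + t]
  have hIsub : Icc cs (cs + t) ⊆ Icc 0 xmax :=
    fun y hy => ⟨le_trans hcspos.le hy.1, le_trans hy.2 ht2⟩
  have hIoo_sub : Ioo cs (cs + t) ⊆ Ioo 0 xmax :=
    fun y hy => ⟨lt_trans hcspos hy.1, lt_of_lt_of_le hy.2 ht2⟩
  obtain ⟨ystar, hyI, hymax'⟩ := isCompact_Icc.exists_isMaxOn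
    (nonempty_Icc.mpr (by linarith)) (hu'Cont.mono hIsub)
  have hymax : ∀ y ∈ Icc cs (cs + t), u' y ≤ u' ystar := hymax'
  set V := u' ystar with hV
  have hV0 : 0 ≤ V := hnn ystar (hIsub hyI)
  have hVpos : 0 < V :=
    lt_of_lt_of_le (hpos_right (cs + t) (by linarith) (by linarith))
      (hymax _ ⟨by linarith, le_refl _⟩)
  -- u x ≤ u cs + V * (x - cs) on I
  have hub2 : ∀ x ∈ Icc cs (cs + t), u x ≤ u cs + V * (x - cs) := by
    have hanti : AntitoneOn (fun x => u x - V * x) (Icc cs (cs + t)) := by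
      refine antitoneOn_of_deriv_nonpos (convex_Icc _ _)
        ((huCont.mono hIsub).sub (continuousOn_const.mul continuousOn_id)) ?_ ?_
      · intro y hy
        rw [interior_Icc] at hy
        exact ((huDeriv y (hIoo_sub hy)).sub
          ((hasDerivAt_id y).const_mul V)).differentiableAt.differentiableWithinAt
      · intro y hy
        rw [interior_Icc] at hy
        have hd : HasDerivAt (fun x => u x - V * x) (u' y - V * 1) y :=
          (huDeriv y (hIoo_sub hy)).sub ((hasDerivAt_id y).const_mul V)
        rw [hd.deriv]
        have := hymax y (Ioo_subset_Icc_self hy)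
        simp only [mul_one]; linarith
    intro x hxI
    have := hanti (left_mem_Icc.mpr (by linarith)) hxI hxI.1
    simp only at this
    nlinarith [this]
  -- the ODE bound on Ioo cs (cs+t)
  have hODE : ∀ x ∈ Ioo cs (cs + t),
      σbar ^ 2 / 2 * u'' x ≤ α * V * t + |mbar| * V - s * (x - cs) := by
    intro x hxm
    have hxIoo : x ∈ Ioo 0 xmax := hIoo_sub hxm
    have hxIcc : x ∈ Icc 0 xmax := Ioo_subset_Icc_self hxIoo
    have h1 : 0 < u' x := hpos_right x hxm.1 hxIoo.2.le
    have h2 : u' x < rbar := by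
      refine hlt_r x hxIcc ?_
      rw [Real.dist_eq, abs_of_nonneg (by linarith [hxm.1])]
      linarith [hxm.2]
    have h3 : σbar ^ 2 / 2 * u'' x + mbar * u' x - α * u x + hbar x = 0 :=
      min3_first (huEq x hxIoo) h1 (by linarith)
    have h4 : α * u x ≤ α * (u cs + V * (x - cs)) :=
      mul_le_mul_of_nonneg_left (hub2 x (Ioo_subset_Icc_self hxm)) hα.le
    have h5 : α * (V * (x - cs)) ≤ α * V * t := by
      have h5' : 0 ≤ α * V * (t - (x - cs)) :=
        mul_nonneg (mul_nonneg hα.le hV0) (by linarith [hxm.2.le])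
      linarith [h5']
    have h6 : -(mbar * u' x) ≤ |mbar| * V := by
      have e1 : -(mbar * u' x) ≤ |mbar * u' x| := neg_le_abs _
      have e2 : |mbar * u' x| = |mbar| * u' x := by
        rw [abs_mul, abs_of_nonneg h1.le]
      have e3 : |mbar| * u' x ≤ |mbar| * V :=
        mul_le_mul_of_nonneg_left (hymax x (Ioo_subset_Icc_self hxm)) (abs_nonneg _)
      linarith
    have h7 : hbar cs + s * (x - cs) ≤ hbar x := hslope x hxIcc hxm.1
    linarith
  -- Q and antitonicity of u' - Q
  set K := α * V * t + |mbar| * V with hK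
  have hQd : ∀ y : ℝ, HasDerivAt (fun y : ℝ => 2 / σbar ^ 2 * (K * (y - cs) - s * (y - cs) ^ 2 / 2))
      (2 / σbar ^ 2 * (K - s * (y - cs))) y := by
    intro y
    have h1 : HasDerivAt (fun y : ℝ => y - cs) 1 y := (hasDerivAt_id y).sub_const cs
    have h2 : HasDerivAt (fun y : ℝ => (y - cs) ^ 2) ((2:ℕ) * (y - cs) ^ (2-1) * 1) y := h1.pow 2
    have h3 := ((h1.const_mul K).sub ((h2.const_mul s).div_const 2)).const_mul (2 / σbar ^ 2)
    refine HasDerivAt.congr_deriv h3 ?_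
    push_cast
    ring
  set Q := fun y : ℝ => 2 / σbar ^ 2 * (K * (y - cs) - s * (y - cs) ^ 2 / 2) with hQ
  have hanti2 : AntitoneOn (fun y => u' y - Q y) (Icc cs (cs + t)) := by
    refine antitoneOn_of_deriv_nonpos (convex_Icc _ _)
      ((hu'Cont.mono hIsub).sub (fun y _ => (hQd y).continuousAt.continuousWithinAt)) ?_ ?_
    · intro y hy
      rw [interior_Icc] at hy
      exact ((hu'Deriv y (hIoo_sub hy)).sub (hQd y)).differentiableAt.differentiableWithinAt
    · intro y hy
      rw [interior_Icc] at hy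
      have hd : HasDerivAt (fun x => u' x - Q x) (u'' y - 2 / σbar ^ 2 * (K - s * (y - cs))) y :=
        (hu'Deriv y (hIoo_sub hy)).sub (hQd y)
      rw [hd.deriv]
      have hO := hODE y hy
      have h2 : u'' y ≤ 2 / σbar ^ 2 * (K - s * (y - cs)) := by
        rw [div_mul_eq_mul_div, le_div_iff₀ hσ2]
        linarith [hO]
      linarith [h2]
  have hQcs : Q cs = 0 := by rw [hQ]; simp
  have hVQ : V ≤ Q ystar := by
    have := hanti2 (left_mem_Icc.mpr (by linarith)) hyI hyI.1
    simp only at this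
    rw [hu'cs, hQcs] at this
    linarith
  have hQb : Q ystar ≤ 2 / σbar ^ 2 * (α * t ^ 2 + |mbar| * t) * V := by
    rw [hQ]
    have hy1 : 0 ≤ ystar - cs := by linarith [hyI.1]
    have hy2 : ystar - cs ≤ t := by linarith [hyI.2]
    have hKnn : 0 ≤ K := by
      rw [hK]
      exact add_nonneg (mul_nonneg (mul_nonneg hα.le hV0) htpos.le)
        (mul_nonneg (abs_nonneg _) hV0)
    have h1 : K * (ystar - cs) - s * (ystar - cs) ^ 2 / 2 ≤ K * t := by
      have e1 : 0 ≤ K * (t - (ystar - cs)) := mul_nonneg hKnn (by linarith)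
      have e2 : 0 ≤ s * (ystar - cs) ^ 2 := mul_nonneg hspos.le (sq_nonneg _)
      nlinarith [e1, e2]
    have h2 : (0:ℝ) ≤ 2 / σbar ^ 2 := by positivity
    calc 2 / σbar ^ 2 * (K * (ystar - cs) - s * (ystar - cs) ^ 2 / 2)
        ≤ 2 / σbar ^ 2 * (K * t) := mul_le_mul_of_nonneg_left h1 h2
      _ = 2 / σbar ^ 2 * (α * t ^ 2 + |mbar| * t) * V := by rw [hK]; ring
  -- conclude
  have hfrac : 2 / σbar ^ 2 * (α * t ^ 2 + |mbar| * t) ≤ 1 / 2 := by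
    rw [div_mul_eq_mul_div, div_le_div_iff₀ hσ2 (by norm_num : (0:ℝ) < 2)]
    linarith [hkey]
  have : V ≤ 1 / 2 * V := by
    calc V ≤ Q ystar := hVQ
      _ ≤ 2 / σbar ^ 2 * (α * t ^ 2 + |mbar| * t) * V := hQb
      _ ≤ 1 / 2 * V := mul_le_mul_of_nonneg_right hfrac hV0
  linarith

end Sol

section Key

set_option maxHeartbeats 1600000 in
private lemma key_le (xmax σbar mbar α rbar : ℝ)
    (hx : 0 < xmax) (hσ : σbar ≠ 0) (hα : 0 < α) (hr : 0 < rbar)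
    (hbar : ℝ → ℝ)
    (hbarCont : ContinuousOn hbar (Set.Icc 0 xmax))
    (hbarConv : ConvexOn ℝ (Set.Icc 0 xmax) hbar)
    (hbarMono : StrictMonoOn hbar (Set.Icc 0 xmax))
    (f f' f'' : ℝ → ℝ)
    (hfCont : ContinuousOn f (Set.Icc 0 xmax))
    (hf'Cont : ContinuousOn f' (Set.Icc 0 xmax))
    (hf''Cont : ContinuousOn f'' (Set.Icc 0 xmax))
    (hfDeriv : ∀ x ∈ Set.Ioo 0 xmax, HasDerivAt f (f' x) x)
    (hf'Deriv : ∀ x ∈ Set.Ioo 0 xmax, HasDerivAt f' (f'' x) x)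
    (hfEq : ∀ x ∈ Set.Ioo 0 xmax,
      min (min (σbar ^ 2 / 2 * f'' x + mbar * f' x - α * f x + hbar x) (f' x))
        (rbar - f' x) = 0)
    (hf0 : f' 0 = 0) (hfb : f' xmax = rbar)
    (g g' g'' : ℝ → ℝ)
    (hgCont : ContinuousOn g (Set.Icc 0 xmax))
    (hg'Cont : ContinuousOn g' (Set.Icc 0 xmax))
    (hg''Cont : ContinuousOn g'' (Set.Icc 0 xmax))
    (hgDeriv : ∀ x ∈ Set.Ioo 0 xmax, HasDerivAt g (g' x) x)
    (hg'Deriv : ∀ x ∈ Set.Ioo 0 xmax, HasDerivAt g' (g'' x) x)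
    (hgEq : ∀ x ∈ Set.Ioo 0 xmax,
      min (min (σbar ^ 2 / 2 * g'' x + mbar * g' x - α * g x + hbar x) (g' x))
        (rbar - g' x) = 0)
    (hg0 : g' 0 = 0) (hgb : g' xmax = rbar) :
    ∀ x ∈ Set.Icc (0:ℝ) xmax, f x ≤ g x := by
  have hσ2 : 0 < σbar ^ 2 := lt_of_le_of_ne (sq_nonneg σbar) (Ne.symm (pow_ne_zero 2 hσ))
  have hσh : 0 < σbar ^ 2 / 2 := by linarith
  have hnnf := deriv_nonneg hx hr hfEq hf0 hfb
  have hlef := deriv_le hx hr hfEq hf0 hfb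
  have hposf := deriv_pos hx hσ hα hr hbarCont hbarConv hbarMono hfCont hf'Cont hf''Cont
    hfDeriv hf'Deriv hfEq hf0 hfb
  have hΓf := gamma_nonneg hx hbarCont hfCont hf'Cont hf''Cont hfEq
  have hnng := deriv_nonneg hx hr hgEq hg0 hgb
  have hleg := deriv_le hx hr hgEq hg0 hgb
  have hposg := deriv_pos hx hσ hα hr hbarCont hbarConv hbarMono hgCont hg'Cont hg''Cont
    hgDeriv hg'Deriv hgEq hg0 hgb
  have hΓg := gamma_nonneg hx hbarCont hgCont hg'Cont hg''Cont hgEq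
  by_contra hcon
  push_neg at hcon
  obtain ⟨x₁, hx₁, hgt1⟩ := hcon
  obtain ⟨xs, hxs, hmax'⟩ := isCompact_Icc.exists_isMaxOn (nonempty_Icc.mpr hx.le)
    (hfCont.sub hgCont)
  have hmax : ∀ x ∈ Icc 0 xmax, f x - g x ≤ f xs - g xs := fun x hm => hmax' hm
  have hM : 0 < f xs - g xs := lt_of_lt_of_le (by linarith) (hmax x₁ hx₁)
  -- derivative equality at the max
  have hps : f' xs = g' xs := by
    rcases eq_or_lt_of_le hxs.1 with h0 | h0
    · rw [← h0, hf0, hg0]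
    rcases eq_or_lt_of_le hxs.2 with h1 | h1
    · rw [h1, hfb, hgb]
    · have hloc : IsLocalMax (fun x => f x - g x) xs := by
        filter_upwards [Icc_mem_nhds h0 h1] with y hy using hmax y hy
      have hd : HasDerivAt (fun x => f x - g x) (f' xs - g' xs) xs :=
        (hfDeriv xs ⟨h0, h1⟩).sub (hgDeriv xs ⟨h0, h1⟩)
      have := hloc.hasDerivAt_eq_zero hd
      linarith
  -- second derivative at a max point with equal first derivatives
  have hwsec : ∀ x₀ ∈ Icc 0 xmax, (∀ x ∈ Icc 0 xmax, f x - g x ≤ f x₀ - g x₀) →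
      f' x₀ = g' x₀ → f'' x₀ - g'' x₀ ≤ 0 := by
    intro x₀ h₀ hmx hps0
    exact second_deriv_nonpos_at_max (w := fun x => f x - g x) (w' := fun x => f' x - g' x)
      (w'' := fun x => f'' x - g'' x) hx (hfCont.sub hgCont) (hf'Cont.sub hg'Cont)
      (hf''Cont.sub hg''Cont) (fun y hy => (hfDeriv y hy).sub (hgDeriv y hy))
      (fun y hy => (hf'Deriv y hy).sub (hg'Deriv y hy)) h₀ hmx
      (by show f' x₀ - g' x₀ = 0; rw [hps0]; ring)
  rcases eq_or_lt_of_le (hnnf xs hxs) with hp0 | hp0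
  · -- case p = 0 : the max is at 0
    have hxs0 : xs = 0 := by
      by_contra hne
      have h : 0 < xs := lt_of_le_of_ne hxs.1 (Ne.symm hne)
      have := hposf xs ⟨h, hxs.2⟩
      rw [← hp0] at this
      exact lt_irrefl 0 this
    subst hxs0
    obtain ⟨δf, hδf, hδfp⟩ := Metric.continuousWithinAt_iff.mp
      (hf'Cont 0 (left_mem_Icc.mpr hx.le)) rbar hr
    obtain ⟨δg, hδg, hδgp⟩ := Metric.continuousWithinAt_iff.mp
      (hg'Cont 0 (left_mem_Icc.mpr hx.le)) rbar hr
    set δ := min (min δf δg) xmax with hδdef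
    have hδpos : 0 < δ := lt_min (lt_min hδf hδg) hx
    have hs0 : ∀ z ∈ Ioo 0 δ,
        (σbar ^ 2 / 2 * f'' z + mbar * f' z - α * f z + hbar z = 0 ∧
         σbar ^ 2 / 2 * g'' z + mbar * g' z - α * g z + hbar z = 0) := by
      intro z hz
      have hzIoo : z ∈ Ioo 0 xmax := ⟨hz.1, lt_of_lt_of_le hz.2 (min_le_right _ _)⟩
      have hzIcc := Ioo_subset_Icc_self hzIoo
      have hdist : dist z (0:ℝ) < min δf δg := by
        rw [Real.dist_eq, sub_zero, abs_of_pos hz.1]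
        exact lt_of_lt_of_le hz.2 (min_le_left _ _)
      have hfr : f' z < rbar := by
        have := hδfp hzIcc (lt_of_lt_of_le hdist (min_le_left _ _))
        rw [Real.dist_eq, hf0, sub_zero] at this
        exact lt_of_le_of_lt (le_abs_self _) this
      have hgr : g' z < rbar := by
        have := hδgp hzIcc (lt_of_lt_of_le hdist (min_le_right _ _))
        rw [Real.dist_eq, hg0, sub_zero] at this
        exact lt_of_le_of_lt (le_abs_self _) this
      exact ⟨min3_first (hfEq z hzIoo) (hposf z ⟨hz.1, hzIoo.2.le⟩) (by linarith),
             min3_first (hgEq z hzIoo) (hposg z ⟨hz.1, hzIoo.2.le⟩) (by linarith)⟩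
    have hcl0 : (0:ℝ) ∈ closure (Ioo 0 δ) := by
      rw [closure_Ioo hδpos.ne]
      exact left_mem_Icc.mpr hδpos.le
    have hsub : Ioo 0 δ ⊆ Icc 0 xmax :=
      fun z hz => ⟨hz.1.le, le_trans hz.2.le (min_le_right _ _)⟩
    have hΓf0 : σbar ^ 2 / 2 * f'' 0 + mbar * f' 0 - α * f 0 + hbar 0 = 0 :=
      eq_zero_of_closure (gammaCont hbarCont hfCont hf'Cont hf''Cont) hsub
        (fun z hz => (hs0 z hz).1) (left_mem_Icc.mpr hx.le) hcl0
    have hΓg0 : σbar ^ 2 / 2 * g'' 0 + mbar * g' 0 - α * g 0 + hbar 0 = 0 :=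
      eq_zero_of_closure (gammaCont hbarCont hgCont hg'Cont hg''Cont) hsub
        (fun z hz => (hs0 z hz).2) (left_mem_Icc.mpr hx.le) hcl0
    have hsec := hwsec 0 (left_mem_Icc.mpr hx.le) hmax (by rw [hf0, hg0])
    rw [hf0] at hΓf0
    rw [hg0] at hΓg0
    have h9 : σbar ^ 2 / 2 * (f'' 0 - g'' 0) ≤ 0 :=
      mul_nonpos_of_nonneg_of_nonpos hσh.le hsec
    nlinarith [mul_pos hα hM]
  rcases eq_or_lt_of_le (hlef xs hxs) with hpr | hpr
  swap
  · -- case 0 < p < rbar : interior, both ODEs hold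
    have hxs0 : 0 < xs := by
      rcases eq_or_lt_of_le hxs.1 with h | h
      · exfalso; rw [← h, hf0] at hp0; exact lt_irrefl 0 hp0
      · exact h
    have hxsx : xs < xmax := by
      rcases eq_or_lt_of_le hxs.2 with h | h
      · exfalso; rw [h, hfb] at hpr; exact lt_irrefl _ hpr
      · exact h
    have hxsIoo : xs ∈ Ioo 0 xmax := ⟨hxs0, hxsx⟩
    have hΓfz := min3_first (hfEq xs hxsIoo) hp0 (by linarith)
    have hgp : 0 < g' xs := by rw [← hps]; exact hp0
    have hgr : g' xs < rbar := by rw [← hps]; exact hpr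
    have hΓgz := min3_first (hgEq xs hxsIoo) hgp (by linarith)
    have hsec := hwsec xs hxs hmax hps
    rw [hps] at hΓfz
    have h9 : σbar ^ 2 / 2 * (f'' xs - g'' xs) ≤ 0 :=
      mul_nonpos_of_nonneg_of_nonpos hσh.le hsec
    nlinarith [mul_pos hα hM]
  · -- case p = rbar
    -- T : where both derivatives are ≡ rbar up to xs
    set T := {x : ℝ | x ∈ Icc 0 xs ∧ ∀ y ∈ Icc x xs, f' y = rbar ∧ g' y = rbar} with hT
    have hTmem : xs ∈ T := by
      refine ⟨⟨hxs.1, le_refl xs⟩, ?_⟩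
      intro y hy
      have hyy : y = xs := le_antisymm hy.2 hy.1
      rw [hyy]
      exact ⟨hpr, by rw [← hps]; exact hpr⟩
    have hTne : T.Nonempty := ⟨xs, hTmem⟩
    have hTbdd : BddBelow T := ⟨0, fun y hy => hy.1.1⟩
    set c := sInf T with hcdef
    have hc0 : 0 ≤ c := le_csInf hTne (fun y hy => hy.1.1)
    have hcxs : c ≤ xs := csInf_le hTbdd hTmem
    have hcIcc : c ∈ Icc 0 xmax := ⟨hc0, le_trans hcxs hxs.2⟩
    have hgt : ∀ y, c < y → y ≤ xs → f' y = rbar ∧ g' y = rbar := by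
      intro y h1 h2
      obtain ⟨z, hzT, hzy⟩ := exists_lt_of_csInf_lt hTne h1
      exact hzT.2 y ⟨hzy.le, h2⟩
    have hfc : f' c = rbar ∧ g' c = rbar := by
      rcases eq_or_lt_of_le hcxs with hce | hce
      · rw [hce]
        exact ⟨hpr, by rw [← hps]; exact hpr⟩
      · have hclos : c ∈ closure (Ioc c xs) := by
          rw [closure_Ioc hce.ne]
          exact ⟨le_refl c, hcxs⟩
        have hsub : Ioc c xs ⊆ Icc 0 xmax :=
          fun z hz => ⟨le_trans hc0 hz.1.le, le_trans hz.2 hxs.2⟩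
        constructor
        · have h0 := eq_zero_of_closure (φ := fun z => f' z - rbar)
            (hf'Cont.sub continuousOn_const) hsub
            (fun z hz => by show f' z - rbar = 0; rw [(hgt z hz.1 hz.2).1]; ring) hcIcc hclos
          linarith
        · have h0 := eq_zero_of_closure (φ := fun z => g' z - rbar)
            (hg'Cont.sub continuousOn_const) hsub
            (fun z hz => by show g' z - rbar = 0; rw [(hgt z hz.1 hz.2).2]; ring) hcIcc hclos
          linarith
    have hcT : ∀ y ∈ Icc c xs, f' y = rbar ∧ g' y = rbar := by
      intro y hy
      rcases eq_or_lt_of_le hy.1 with he | he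
      · rw [← he]; exact hfc
      · exact hgt y he hy.2
    have hcpos : 0 < c := by
      rcases eq_or_lt_of_le hc0 with h | h
      · exfalso
        have h1 := hfc.1
        rw [← h, hf0] at h1
        exact hr.ne h1
      · exact h
    -- w is constant = max on [c, xs]
    have hwc : f c - g c = f xs - g xs := by
      rcases eq_or_lt_of_le hcxs with hce | hce
      · rw [hce]
      · have hsubI : Icc c xs ⊆ Icc 0 xmax :=
          fun z hz => ⟨le_trans hc0 hz.1, le_trans hz.2 hxs.2⟩
        have hsubO : Ioo c xs ⊆ Ioo 0 xmax :=
          fun z hz => ⟨lt_of_le_of_lt hc0 hz.1, lt_of_lt_of_le hz.2 hxs.2⟩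
        have hz0 : ∀ z ∈ Ioo c xs, f' z - g' z = 0 := by
          intro z hz
          have h1 := hcT z (Ioo_subset_Icc_self hz)
          rw [h1.1, h1.2]; ring
        have hmono := myMonotoneOn (φ' := fun z => f' z - g' z)
          ((hfCont.sub hgCont).mono hsubI)
          (fun z hzz => (hfDeriv z (hsubO hzz)).sub (hgDeriv z (hsubO hzz)))
          (fun z hzz => le_of_eq (hz0 z hzz).symm)
        have hanti := myAntitoneOn (φ' := fun z => f' z - g' z)
          ((hfCont.sub hgCont).mono hsubI)
          (fun z hzz => (hfDeriv z (hsubO hzz)).sub (hgDeriv z (hsubO hzz)))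
          (fun z hzz => le_of_eq (hz0 z hzz))
        have e1 := hmono (left_mem_Icc.mpr hcxs) (right_mem_Icc.mpr hcxs) hcxs
        have e2 := hanti (left_mem_Icc.mpr hcxs) (right_mem_Icc.mpr hcxs) hcxs
        simp only [Pi.sub_apply] at e1 e2
        linarith
    have hwmaxc : ∀ x ∈ Icc 0 xmax, f x - g x ≤ f c - g c := by
      intro x hm
      rw [hwc]
      exact hmax x hm
    have hMc : 0 < f c - g c := by rw [hwc]; exact hM
    by_cases hB : ∃ ε > 0, ∀ z ∈ Ico (c - ε) c, g' z = rbar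
    · -- g' is ≡ rbar just left of c; extend the interval, contradiction with醒 inf
      obtain ⟨ε, hε, hεr⟩ := hB
      set b := max (c - ε) 0 with hbdef
      have hbc : b < c := max_lt (by linarith) hcpos
      have hb0 : 0 ≤ b := le_max_right _ _
      have hgb' : ∀ z ∈ Icc b c, g' z = rbar := by
        intro z hz
        rcases eq_or_lt_of_le hz.2 with h | h
        · rw [h]; exact hfc.2
        · exact hεr z ⟨le_trans (le_max_left _ _) hz.1, h⟩
      have hsubI : Icc b c ⊆ Icc 0 xmax :=
        fun z hz => ⟨le_trans hb0 hz.1, le_trans hz.2 hcIcc.2⟩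
      have hsubO : Ioo b c ⊆ Ioo 0 xmax :=
        fun z hz => ⟨lt_of_le_of_lt hb0 hz.1, lt_of_lt_of_le hz.2 hcIcc.2⟩
      have hanti : AntitoneOn (fun x => f x - g x) (Icc b c) := by
        refine myAntitoneOn (φ' := fun z => f' z - g' z) ((hfCont.sub hgCont).mono hsubI)
          (fun z hzz => (hfDeriv z (hsubO hzz)).sub (hgDeriv z (hsubO hzz))) ?_
        intro z hzz
        have h1 : g' z = rbar := hgb' z (Ioo_subset_Icc_self hzz)
        have h2 : f' z ≤ rbar := hlef z (hsubI (Ioo_subset_Icc_self hzz))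
        show f' z - g' z ≤ 0
        linarith
      have hwb : f b - g b = f c - g c := by
        have e1 := hanti (left_mem_Icc.mpr hbc.le) (right_mem_Icc.mpr hbc.le) hbc.le
        have e2 := hwmaxc b (hsubI (left_mem_Icc.mpr hbc.le))
        simp only at e1
        linarith
      have hconst : ∀ z ∈ Icc b c, f z - g z = f c - g c := by
        intro z hz
        have e1 := hanti hz (right_mem_Icc.mpr hbc.le) hz.2
        have e2 := hwmaxc z (hsubI hz)
        simp only at e1
        linarith
      have hf'b : ∀ z ∈ Ioo b c, f' z = rbar := by
        intro z hz
        have hzIoo : z ∈ Ioo 0 xmax := hsubO hz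
        have hd : HasDerivAt (fun x => f x - g x) (f' z - g' z) z :=
          (hfDeriv z hzIoo).sub (hgDeriv z hzIoo)
        have hev : (fun x => f x - g x) =ᶠ[𝓝 z] fun _ => f c - g c := by
          filter_upwards [Ioo_mem_nhds hz.1 hz.2] with y hy
          exact hconst y (Ioo_subset_Icc_self hy)
        have hd0 : HasDerivAt (fun x => f x - g x) 0 z :=
          (hasDerivAt_const z (f c - g c)).congr_of_eventuallyEq hev
        have heq := hd.unique hd0
        have hgz : g' z = rbar := hgb' z (Ioo_subset_Icc_self hz)
        linarith
      have hbT : b ∈ T := by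
        refine ⟨⟨hb0, le_trans hbc.le hcxs⟩, ?_⟩
        intro y hy
        rcases le_or_gt c y with h | h
        · exact hcT y ⟨h, hy.2⟩
        · have hgy : g' y = rbar := hgb' y ⟨hy.1, h.le⟩
          rcases eq_or_lt_of_le hy.1 with he | he
          · -- y = b
            have hclos : b ∈ closure (Ioo b c) := by
              rw [closure_Ioo hbc.ne]
              exact ⟨le_refl b, hbc.le⟩
            have h0 := eq_zero_of_closure (φ := fun z => f' z - rbar)
              (hf'Cont.sub continuousOn_const) (fun z hz => hsubI (Ioo_subset_Icc_self hz))
              (fun z hz => by show f' z - rbar = 0; rw [hf'b z hz]; ring) (hsubI (left_mem_Icc.mpr hbc.le)) hclos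
            rw [← he] at hgy ⊢
            exact ⟨by linarith, hgy⟩
          · exact ⟨hf'b y ⟨he, h⟩, hgy⟩
      have := csInf_le hTbdd hbT
      rw [← hcdef] at this
      linarith
    · -- g' < rbar at points accumulating at c from the left
      push_neg at hB
      have hccl : c ∈ closure {z : ℝ | z ∈ Ioo 0 xmax ∧
          σbar ^ 2 / 2 * g'' z + mbar * g' z - α * g z + hbar z = 0} := by
        rw [Metric.mem_closure_iff]
        intro ε hε
        have hε₂pos : 0 < min (ε/2) (c/2) := lt_min (by linarith) (by linarith)
        obtain ⟨z, hz, hzne⟩ := hB (min (ε/2) (c/2)) hε₂pos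
        have hz0 : 0 < z := by
          have h1 := hz.1
          have h2 : min (ε/2) (c/2) ≤ c/2 := min_le_right _ _
          linarith
        have hzlt : z < xmax := lt_of_lt_of_le hz.2 hcIcc.2
        have hzIoo : z ∈ Ioo 0 xmax := ⟨hz0, hzlt⟩
        have hg'lt : g' z < rbar :=
          lt_of_le_of_ne (hleg z (Ioo_subset_Icc_self hzIoo)) hzne
        have hΓz := min3_first (hgEq z hzIoo) (hposg z ⟨hz0, hzlt.le⟩) (by linarith)
        refine ⟨z, ⟨hzIoo, hΓz⟩, ?_⟩
        rw [Real.dist_eq, abs_of_nonneg (by linarith [hz.2.le])]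
        have h2 : min (ε/2) (c/2) ≤ ε/2 := min_le_left _ _
        have h1 := hz.1
        linarith
      have hΓgc : σbar ^ 2 / 2 * g'' c + mbar * g' c - α * g c + hbar c = 0 :=
        eq_zero_of_closure (gammaCont hbarCont hgCont hg'Cont hg''Cont)
          (fun z hz => Ioo_subset_Icc_self hz.1) (fun z hz => hz.2) hcIcc hccl
      rcases lt_or_eq_of_le hcIcc.2 with hclt | hceq
      · -- c interior
        have hcIoo : c ∈ Ioo 0 xmax := ⟨hcpos, hclt⟩
        have hg''c : g'' c = 0 := by
          have hloc : IsLocalMax g' c := by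
            filter_upwards [Icc_mem_nhds hcpos hclt] with y hy
            rw [hfc.2]
            exact hleg y hy
          exact hloc.hasDerivAt_eq_zero (hg'Deriv c hcIoo)
        have hf''c : f'' c = 0 := by
          have hloc : IsLocalMax f' c := by
            filter_upwards [Icc_mem_nhds hcpos hclt] with y hy
            rw [hfc.1]
            exact hlef y hy
          exact hloc.hasDerivAt_eq_zero (hf'Deriv c hcIoo)
        have hΓfc := hΓf c hcIcc
        rw [hfc.1, hf''c] at hΓfc
        rw [hfc.2, hg''c] at hΓgc
        nlinarith [mul_pos hα hMc]
      · -- c = xmax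
        have hg''x : 0 ≤ g'' xmax :=
          second_deriv_nonneg_at_right_max hx hg'Cont hg''Cont hg'Deriv hleg hgb
        have hMx : 0 < f xmax - g xmax := by rw [← hceq]; exact hMc
        rw [hceq, hgb] at hΓgc
        by_cases hA : ∃ η > 0, ∀ z ∈ Ico (xmax - η) xmax, f' z = rbar
        · -- f' ≡ rbar near xmax, so f'' xmax = 0
          obtain ⟨η, hη, hηr⟩ := hA
          set b := max (xmax - η) 0 with hbdef
          have hbx : b < xmax := max_lt (by linarith) hx
          have hb0 : 0 ≤ b := le_max_right _ _
          have hf''z : ∀ z ∈ Ioo b xmax, f'' z = 0 := by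
            intro z hz
            have hzIoo : z ∈ Ioo 0 xmax := ⟨lt_of_le_of_lt hb0 hz.1, hz.2⟩
            have hev : f' =ᶠ[𝓝 z] fun _ => rbar := by
              filter_upwards [Ioo_mem_nhds hz.1 hz.2] with y hy
              exact hηr y ⟨le_trans (le_max_left _ _) hy.1.le, hy.2⟩
            have hd0 : HasDerivAt f' 0 z :=
              (hasDerivAt_const z rbar).congr_of_eventuallyEq hev
            exact (hf'Deriv z hzIoo).unique hd0
          have hclosx : xmax ∈ closure (Ioo b xmax) := by
            rw [closure_Ioo hbx.ne]
            exact ⟨hbx.le, le_refl xmax⟩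
          have hf''x : f'' xmax = 0 :=
            eq_zero_of_closure hf''Cont
              (fun z hz => ⟨le_trans hb0 hz.1.le, hz.2.le⟩) hf''z
              (right_mem_Icc.mpr hx.le) hclosx
          have hΓfx := hΓf xmax (right_mem_Icc.mpr hx.le)
          rw [hfb, hf''x] at hΓfx
          nlinarith [mul_pos hα hMx, mul_nonneg hσh.le hg''x]
        · -- f' < rbar at points accumulating at xmax
          push_neg at hA
          have hfclx : xmax ∈ closure {z : ℝ | z ∈ Ioo 0 xmax ∧
              σbar ^ 2 / 2 * f'' z + mbar * f' z - α * f z + hbar z = 0} := by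
            rw [Metric.mem_closure_iff]
            intro ε hε
            have hε₂pos : 0 < min (ε/2) (xmax/2) := lt_min (by linarith) (by linarith)
            obtain ⟨z, hz, hzne⟩ := hA (min (ε/2) (xmax/2)) hε₂pos
            have hz0 : 0 < z := by
              have h1 := hz.1
              have h2 : min (ε/2) (xmax/2) ≤ xmax/2 := min_le_right _ _
              linarith
            have hzIoo : z ∈ Ioo 0 xmax := ⟨hz0, hz.2⟩
            have hfr : f' z < rbar :=
              lt_of_le_of_ne (hlef z (Ioo_subset_Icc_self hzIoo)) hzne
            have hΓz := min3_first (hfEq z hzIoo) (hposf z ⟨hz0, hz.2.le⟩) (by linarith)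
            refine ⟨z, ⟨hzIoo, hΓz⟩, ?_⟩
            rw [Real.dist_eq, abs_of_nonneg (by linarith [hz.2.le])]
            have h2 : min (ε/2) (xmax/2) ≤ ε/2 := min_le_left _ _
            have h1 := hz.1
            linarith
          have hΓfx : σbar ^ 2 / 2 * f'' xmax + mbar * f' xmax - α * f xmax + hbar xmax = 0 :=
            eq_zero_of_closure (gammaCont hbarCont hfCont hf'Cont hf''Cont)
              (fun z hz => Ioo_subset_Icc_self hz.1) (fun z hz => hz.2)
              (right_mem_Icc.mpr hx.le) hfclx
          have hmaxx : ∀ x ∈ Icc 0 xmax, f x - g x ≤ f xmax - g xmax := by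
            intro x hm
            rw [← hceq]
            exact hwmaxc x hm
          have hsec := hwsec xmax (right_mem_Icc.mpr hx.le) hmaxx (by rw [hfb, hgb])
          rw [hfb] at hΓfx
          have h9 : σbar ^ 2 / 2 * (f'' xmax - g'' xmax) ≤ 0 :=
            mul_nonpos_of_nonneg_of_nonpos hσh.le hsec
          nlinarith [mul_pos hα hMx]

end Key



set_option maxHeartbeats 800000 in

/-- Uniqueness of `C²[0,𝐱]` solutions of the Harrison–Taksar Bellman equation
`min{ (1/2)σ̄²u'' + m̄u' − αu + h̄, u', r̄ − u' } = 0` on `(0,𝐱)` with Neumann boundary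
conditions `u'(0) = 0`, `u'(𝐱) = r̄`. A `C²[0,𝐱]` function is encoded by `f` together
with functions `f'`, `f''` that are derivatives on `(0,𝐱)` and such that `f`, `f'`, `f''`
are continuous on `[0,𝐱]` (continuous extension of the derivatives to the boundary). -/
theorem bellman_C2_uniqueness (xmax σbar mbar α rbar : ℝ)
    (hx : 0 < xmax) (hσ : σbar ≠ 0) (hα : 0 < α) (hr : 0 < rbar)
    (hbar : ℝ → ℝ)
    (hbarCont : ContinuousOn hbar (Set.Icc 0 xmax))
    (hbarConv : ConvexOn ℝ (Set.Icc 0 xmax) hbar)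
    (hbarMono : StrictMonoOn hbar (Set.Icc 0 xmax))
    (hbar0 : hbar 0 = 0)
    (f f' f'' : ℝ → ℝ)
    (hfCont : ContinuousOn f (Set.Icc 0 xmax))
    (hf'Cont : ContinuousOn f' (Set.Icc 0 xmax))
    (hf''Cont : ContinuousOn f'' (Set.Icc 0 xmax))
    (hfDeriv : ∀ x ∈ Set.Ioo 0 xmax, HasDerivAt f (f' x) x)
    (hf'Deriv : ∀ x ∈ Set.Ioo 0 xmax, HasDerivAt f' (f'' x) x)
    (hfEq : ∀ x ∈ Set.Ioo 0 xmax,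
      min (min (σbar ^ 2 / 2 * f'' x + mbar * f' x - α * f x + hbar x) (f' x))
        (rbar - f' x) = 0)
    (hf0 : f' 0 = 0) (hfb : f' xmax = rbar)
    (g g' g'' : ℝ → ℝ)
    (hgCont : ContinuousOn g (Set.Icc 0 xmax))
    (hg'Cont : ContinuousOn g' (Set.Icc 0 xmax))
    (hg''Cont : ContinuousOn g'' (Set.Icc 0 xmax))
    (hgDeriv : ∀ x ∈ Set.Ioo 0 xmax, HasDerivAt g (g' x) x)
    (hg'Deriv : ∀ x ∈ Set.Ioo 0 xmax, HasDerivAt g' (g'' x) x)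
    (hgEq : ∀ x ∈ Set.Ioo 0 xmax,
      min (min (σbar ^ 2 / 2 * g'' x + mbar * g' x - α * g x + hbar x) (g' x))
        (rbar - g' x) = 0)
    (hg0 : g' 0 = 0) (hgb : g' xmax = rbar) :
    ∀ x ∈ Set.Icc (0:ℝ) xmax, f x = g x := by
  intro x hxm
  have h1 := key_le xmax σbar mbar α rbar hx hσ hα hr hbar hbarCont hbarConv hbarMono
    f f' f'' hfCont hf'Cont hf''Cont hfDeriv hf'Deriv hfEq hf0 hfb
    g g' g'' hgCont hg'Cont hg''Cont hgDeriv hg'Deriv hgEq hg0 hgb x hxm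
  have h2 := key_le xmax σbar mbar α rbar hx hσ hα hr hbar hbarCont hbarConv hbarMono
    g g' g'' hgCont hg'Cont hg''Cont hgDeriv hg'Deriv hgEq hg0 hgb
    f f' f'' hfCont hf'Cont hf''Cont hfDeriv hf'Deriv hfEq hf0 hfb x hxm
  linarith
end
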